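/- For all integers n ≥ 0 and m ≥ 0: Σ_{k=0}^{n} C(n,k) H_k(m) = Σ_{j=0}^{m} C(m,j) Σ_{k=0}^{n} H_k(j) (−1)^{n−k} 2^k · ((m−j)!/(n−k)!) · s(n−k, m−j). -/

import Mathlib

open Finset

/-- Multiple harmonic-like numbers `H_n(m)`: the sum of `1/(k_1 ⋯ k_m)` over all
`m`-tuples of positive integers with `k_1 + ⋯ + k_m ≤ n`. -/
def Hml (n m : ℕ) : ℚ :=
  ∑ k ∈ (Fintype.piFinset fun _ : Fin m => Finset.Icc 1 n).filter
      (fun k => ∑ i, k i ≤ n),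
    ∏ i, (1 : ℚ) / (k i : ℚ)

/-- The `n`-th harmonic number. -/
def harm (n : ℕ) : ℚ := ∑ j ∈ Finset.Icc 1 n, (1 : ℚ) / (j : ℚ)

/-- The `n`-th second-order harmonic number. -/
def harm2 (n : ℕ) : ℚ := ∑ j ∈ Finset.Icc 1 n, (1 : ℚ) / (j : ℚ) ^ 2

/-- The `n`-th odd harmonic number. -/
def oddharm (n : ℕ) : ℚ := ∑ k ∈ Finset.Icc 1 n, (1 : ℚ) / (2 * (k : ℚ) - 1)

/-- Signed Stirling numbers of the first kind. -/
def stirlingFirst : ℕ → ℕ → ℤ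
  | 0, 0 => 1
  | 0, _ + 1 => 0
  | _ + 1, 0 => 0
  | n + 1, k + 1 => stirlingFirst n k - n * stirlingFirst n (k + 1)

/-- Generalized binomial coefficient `C(r, k) = r(r−1)⋯(r−k+1)/k!`. -/
noncomputable def gchoose (r : ℂ) (k : ℕ) : ℂ :=
  (∏ i ∈ Finset.range k, (r - i)) / (k.factorial : ℂ)

section Aux

open PowerSeries

noncomputable def Lser : ℚ⟦X⟧ := PowerSeries.mk fun n => if n = 0 then 0 else -(1:ℚ)/n
noncomputable def Oser : ℚ⟦X⟧ := PowerSeries.mk fun _ => (1:ℚ)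
noncomputable def U2 : ℚ⟦X⟧ := PowerSeries.rescale 2 Oser
noncomputable def Mser : ℚ⟦X⟧ := Lser - PowerSeries.rescale 2 Lser
def elq (t : ℕ) : ℚ := if t = 0 then 0 else 1/t
def Mq (r : ℕ) : ℚ := if r = 0 then 0 else (2^r - 1)/r

lemma dL : d⁄dX ℚ Lser = -Oser := by
  ext n
  simp [Lser, Oser, PowerSeries.coeff_derivative, PowerSeries.coeff_mk]
  field_simp

lemma oneSubX_mul_O : (1 - PowerSeries.X) * Oser = 1 := by
  ext n
  cases n with
  | zero => simp [Oser]
  | succ k => simp [Oser, sub_mul, PowerSeries.coeff_succ_X_mul]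

lemma keyA (q n : ℕ) :
    ((n:ℚ) + 1) * coeff (n+1) (Lser ^ (q+1)) =
      (n:ℚ) * coeff n (Lser ^ (q+1)) - ((q:ℚ)+1) * coeff n (Lser ^ q) := by
  set f := d⁄dX ℚ (Lser ^ (q+1)) with hf
  have h : (1 - PowerSeries.X) * f = -((q+1 : ℕ) • Lser ^ q) := by
    rw [hf, Derivation.leibniz_pow, dL]
    simp only [Nat.add_sub_cancel, smul_eq_mul, nsmul_eq_mul]
    linear_combination (-(((q+1:ℕ) : ℚ⟦X⟧)) * Lser^q) * oneSubX_mul_O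
  have h' := congrArg (coeff n) h
  rw [sub_mul, one_mul, map_sub, map_neg, map_nsmul, nsmul_eq_mul] at h'
  have hcd : ∀ j : ℕ, coeff j f = coeff (j+1) (Lser ^ (q+1)) * (j+1) := by
    intro j; rw [hf, PowerSeries.coeff_derivative]
  cases n with
  | zero =>
    rw [hcd 0] at h'
    simp only [PowerSeries.coeff_zero_X_mul] at h'
    push_cast at h' ⊢
    linear_combination h'
  | succ k =>
    rw [PowerSeries.coeff_succ_X_mul, hcd (k+1), hcd k] at h'
    push_cast at h' ⊢
    linear_combination h'

lemma stirlCoeff : ∀ q n : ℕ, coeff n (Lser ^ q) =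
    (-1)^n * (q.factorial : ℚ) * (stirlingFirst n q : ℚ) / (n.factorial : ℚ) := by
  intro q
  induction q with
  | zero =>
    intro n
    cases n with
    | zero => simp [stirlingFirst]
    | succ k => simp [stirlingFirst, PowerSeries.coeff_one]
  | succ q ihq =>
    intro n
    induction n with
    | zero =>
      rw [PowerSeries.coeff_zero_eq_constantCoeff, map_pow]
      simp [Lser, stirlingFirst, PowerSeries.constantCoeff_mk]
    | succ n ihn =>
      have hA := keyA q n
      rw [ihn, ihq] at hA
      have hs : (stirlingFirst (n+1) (q+1) : ℚ) =
          (stirlingFirst n q : ℚ) - (n:ℚ) * (stirlingFirst n (q+1) : ℚ) := by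
        rw [show stirlingFirst (n+1) (q+1) = stirlingFirst n q - n * stirlingFirst n (q+1) from rfl]
        push_cast; ring
      have hn1 : ((n:ℚ)+1) ≠ 0 := by positivity
      apply mul_left_cancel₀ hn1
      rw [hA]
      have hfn : ((n.factorial : ℚ)) ≠ 0 := by exact_mod_cast n.factorial_ne_zero
      rw [hs, Nat.factorial_succ, Nat.factorial_succ]
      push_cast
      field_simp
      ring

lemma Hml_zero (n : ℕ) : Hml n 0 = 1 := by
  simp [Hml]

lemma Hml_box (m N n : ℕ) (h : N ≤ n) :
    Hml N m = ∑ k ∈ (Fintype.piFinset fun _ : Fin m => Finset.Icc 1 n).filter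
      (fun k => ∑ i, k i ≤ N), ∏ i, (1 : ℚ) / (k i : ℚ) := by
  unfold Hml
  apply Finset.sum_congr _ (fun _ _ => rfl)
  ext f
  simp only [Finset.mem_filter, Fintype.mem_piFinset, Finset.mem_Icc]
  constructor
  · rintro ⟨h1, h2⟩
    exact ⟨fun i => ⟨(h1 i).1, le_trans (h1 i).2 h⟩, h2⟩
  · rintro ⟨h1, h2⟩
    refine ⟨fun i => ⟨(h1 i).1, ?_⟩, h2⟩
    calc f i ≤ ∑ j, f j := Finset.single_le_sum (fun j _ => Nat.zero_le _) (Finset.mem_univ i)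
      _ ≤ N := h2

lemma Hml_rec (n m : ℕ) :
    Hml n (m+1) = ∑ t ∈ Finset.Icc 1 n, (1/(t:ℚ)) * Hml (n-t) m := by
  have hbox : ∀ t ∈ Finset.Icc 1 n, (1/(t:ℚ)) * Hml (n-t) m
      = ∑ g ∈ (Fintype.piFinset fun _ : Fin m => Finset.Icc 1 n).filter
          (fun g => t + ∑ i, g i ≤ n), (1/(t:ℚ)) * ∏ i, (1:ℚ)/(g i : ℚ) := by
    intro t ht
    rw [Finset.mem_Icc] at ht
    rw [Hml_box m (n-t) n (Nat.sub_le _ _), Finset.mul_sum]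
    apply Finset.sum_congr _ (fun _ _ => rfl)
    apply Finset.filter_congr
    intro g _
    rw [Nat.le_sub_iff_add_le ht.2]
    omega
  rw [Finset.sum_congr rfl hbox, Finset.sum_sigma']
  unfold Hml
  refine Finset.sum_nbij' (fun f => ⟨f 0, Fin.tail f⟩) (fun p => Fin.cons p.1 p.2)
    ?_ ?_ ?_ ?_ ?_
  · intro f hf
    simp only [Finset.mem_filter, Fintype.mem_piFinset] at hf
    simp only [Finset.mem_sigma, Finset.mem_filter, Fintype.mem_piFinset]
    refine ⟨hf.1 0, fun i => hf.1 i.succ, ?_⟩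
    have := hf.2
    rwa [Fin.sum_univ_succ] at this
  · intro p hp
    simp only [Finset.mem_sigma, Finset.mem_filter, Fintype.mem_piFinset] at hp
    simp only [Finset.mem_filter, Fintype.mem_piFinset]
    constructor
    · intro i
      refine Fin.cases ?_ ?_ i
      · simpa using hp.1
      · intro j; simpa using hp.2.1 j
    · rw [Fin.sum_univ_succ]
      simpa using hp.2.2
  · intro f _
    exact Fin.cons_self_tail f
  · intro p _
    simp [Fin.tail_cons]
  · intro f _
    rw [Fin.prod_univ_succ]
    simp [Fin.tail]

lemma coeff_negL (t : ℕ) : coeff t (-Lser) = elq t := by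
  simp only [map_neg, Lser, elq, PowerSeries.coeff_mk]
  split <;> simp_all
  ring

lemma Hml_rec' (n m : ℕ) :
    Hml n (m+1) = ∑ t ∈ Finset.range (n+1), elq t * Hml (n-t) m := by
  rw [Hml_rec]
  rw [Finset.sum_congr rfl (g := fun t => elq t * Hml (n-t) m)
    (fun t ht => by
      rw [Finset.mem_Icc] at ht
      have : t ≠ 0 := by omega
      simp [elq, this])]
  apply Finset.sum_subset
  · intro x hx; rw [Finset.mem_Icc] at hx; rw [Finset.mem_range]; omega
  · intro x hx hnx
    rw [Finset.mem_range] at hx; rw [Finset.mem_Icc] at hnx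
    have : x = 0 := by omega
    simp [this, elq]

lemma hmlCoeff : ∀ m n : ℕ, Hml n m = coeff n (Oser * (-Lser)^m) := by
  intro m
  induction m with
  | zero => intro n; simpa [Oser] using Hml_zero n
  | succ m ih =>
    intro n
    have : Oser * (-Lser)^(m+1) = (-Lser) * (Oser * (-Lser)^m) := by ring
    rw [this, PowerSeries.coeff_mul, Finset.Nat.sum_antidiagonal_eq_sum_range_succ_mk,
      Hml_rec' n m]
    exact Finset.sum_congr rfl fun t _ => by rw [coeff_negL, ih]

lemma binom_div (n : ℕ) :
    ∑ k ∈ Finset.range (n+1), (n.choose k : ℚ)/((k:ℚ)+1) = (2^(n+1) - 1)/((n:ℚ)+1) := by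
  have h1 : ∀ k ∈ Finset.range (n+1), (n.choose k : ℚ)/((k:ℚ)+1)
      = ((n+1).choose (k+1) : ℚ)/((n:ℚ)+1) := by
    intro k _
    have h2 : ((n:ℚ)+1) * (n.choose k : ℚ) = ((n+1).choose (k+1) : ℚ) * ((k:ℚ)+1) := by
      exact_mod_cast congrArg (Nat.cast (R := ℚ)) (Nat.add_one_mul_choose_eq n k)
    have hk : ((k:ℚ)+1) ≠ 0 := by positivity
    have hn : ((n:ℚ)+1) ≠ 0 := by positivity
    field_simp
    linear_combination h2
  rw [Finset.sum_congr rfl h1, ← Finset.sum_div]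
  congr 1
  have h3 : ∑ k ∈ Finset.range (n+2), ((n+1).choose k : ℚ) = 2^(n+1) := by
    have := Nat.sum_range_choose (n+1)
    exact_mod_cast this
  rw [Finset.sum_range_succ'] at h3
  simp only [Nat.choose_zero_right, Nat.cast_one] at h3
  linarith

lemma keyC : ∀ n u : ℕ, ∑ k ∈ Finset.range (n+1), (n.choose k : ℚ) * elq (k - u)
    = ∑ r ∈ Finset.range (n+1), Mq r * ((n-r).choose u : ℚ) := by
  intro n
  induction n with
  | zero => intro u; simp [elq, Mq]
  | succ n ih =>
    intro u
    have hL : ∑ k ∈ Finset.range (n+2), ((n+1).choose k : ℚ) * elq (k - u)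
        = ∑ k ∈ Finset.range (n+1), (n.choose k : ℚ) * elq (k - u)
          + ∑ k ∈ Finset.range (n+1), (n.choose k : ℚ) * elq (k + 1 - u) := by
      rw [Finset.sum_range_succ' (fun k => ((n+1).choose k : ℚ) * elq (k - u))]
      have e0 : elq (0 - u) = 0 := by cases u <;> simp [elq]
      rw [e0, mul_zero, add_zero]
      have : ∀ k ∈ Finset.range (n+1), ((n+1).choose (k+1) : ℚ) * elq (k + 1 - u)
          = (n.choose k : ℚ) * elq (k+1-u) + (n.choose (k+1) : ℚ) * elq (k+1-u) := by
        intro k _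
        rw [Nat.choose_succ_succ]
        push_cast; ring
      rw [Finset.sum_congr rfl this, Finset.sum_add_distrib]
      have h4 : ∑ k ∈ Finset.range (n+1), (n.choose (k+1) : ℚ) * elq (k+1-u)
          = ∑ k ∈ Finset.range (n+1), (n.choose k : ℚ) * elq (k - u) := by
        rw [Finset.sum_range_succ,
          Finset.sum_range_succ' (fun k => (n.choose k : ℚ) * elq (k - u))]
        have e0' : elq (0 - u) = 0 := by cases u <;> simp [elq]
        simp [e0', Nat.choose_succ_self, show elq 0 = 0 from rfl]
      rw [h4]; ring
    rw [hL]
    cases u with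
    | zero =>
      have hM : ∑ k ∈ Finset.range (n+1), (n.choose k : ℚ) * elq (k + 1 - 0) = Mq (n+1) := by
        have : ∀ k ∈ Finset.range (n+1), (n.choose k : ℚ) * elq (k + 1 - 0)
            = (n.choose k : ℚ)/((k:ℚ)+1) := by
          intro k _
          simp [elq]
          push_cast
          ring
        rw [Finset.sum_congr rfl this, binom_div]
        simp [Mq]
      rw [hM, ih 0]
      rw [Finset.sum_range_succ (fun r => Mq r * (((n+1)-r).choose 0 : ℚ))]
      simp [Nat.choose_zero_right]
    | succ v =>
      have he : ∀ k, elq (k + 1 - (v+1)) = elq (k - v) := by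
        intro k; congr 1; omega
      simp only [he]
      rw [ih (v+1), ih v]
      rw [Finset.sum_range_succ (fun r => Mq r * (((n+1)-r).choose (v+1) : ℚ))]
      have hz : Mq (n+1) * (((n+1)-(n+1)).choose (v+1) : ℚ) = 0 := by
        simp [Nat.choose_eq_zero_of_lt]
      rw [hz, add_zero]
      have : ∀ r ∈ Finset.range (n+1), Mq r * (((n+1)-r).choose (v+1) : ℚ)
          = Mq r * ((n-r).choose (v+1) : ℚ) + Mq r * ((n-r).choose v : ℚ) := by
        intro r hr
        rw [Finset.mem_range] at hr
        have : n + 1 - r = (n - r) + 1 := by omega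
        rw [this, Nat.choose_succ_succ]
        push_cast; ring
      rw [Finset.sum_congr rfl this, Finset.sum_add_distrib]

lemma coeff_Mser (r : ℕ) : coeff r Mser = Mq r := by
  simp only [Mser, map_sub, PowerSeries.coeff_rescale, Lser, PowerSeries.coeff_mk, Mq]
  split
  · simp
  · rename_i h
    have : (r : ℚ) ≠ 0 := by exact_mod_cast h
    field_simp
    ring

lemma coeff_U2 (r : ℕ) : coeff r U2 = 2^r := by
  simp [U2, Oser, PowerSeries.coeff_rescale]

lemma transform : ∀ m n : ℕ,
    ∑ k ∈ Finset.range (n+1), (n.choose k : ℚ) * Hml k m = coeff n (U2 * Mser ^ m) := by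
  intro m
  induction m with
  | zero =>
    intro n
    simp only [pow_zero, mul_one, coeff_U2, Hml_zero, mul_one]
    have := Nat.sum_range_choose n
    exact_mod_cast this
  | succ m ih =>
    intro n
    have step1 : ∀ k ∈ Finset.range (n+1), (n.choose k : ℚ) * Hml k (m+1)
        = ∑ u ∈ Finset.range (n+1), (n.choose k : ℚ) * (elq (k-u) * Hml u m) := by
      intro k hk
      rw [Finset.mem_range] at hk
      rw [Hml_rec', Finset.mul_sum]
      have refl1 : ∑ t ∈ Finset.range (k+1), (n.choose k : ℚ) * (elq t * Hml (k-t) m)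
          = ∑ u ∈ Finset.range (k+1), (n.choose k : ℚ) * (elq (k-u) * Hml u m) := by
        rw [← Finset.sum_range_reflect]
        apply Finset.sum_congr rfl
        intro u hu
        rw [Finset.mem_range] at hu
        have h1 : k + 1 - 1 - u = k - u := by omega
        rw [h1]
        have h2 : k - (k - u) = u := by omega
        rw [h2]
      rw [refl1]
      apply Finset.sum_subset
      · intro x hx; rw [Finset.mem_range] at hx ⊢; omega
      · intro x hx hnx
        rw [Finset.mem_range] at hx hnx
        have : k - x = 0 := by omega
        simp [this, show elq 0 = 0 from rfl]
    rw [Finset.sum_congr rfl step1, Finset.sum_comm]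
    have step2 : ∀ u ∈ Finset.range (n+1),
        ∑ k ∈ Finset.range (n+1), (n.choose k : ℚ) * (elq (k-u) * Hml u m)
        = Hml u m * ∑ r ∈ Finset.range (n+1), Mq r * ((n-r).choose u : ℚ) := by
      intro u _
      rw [← keyC, Finset.mul_sum]
      apply Finset.sum_congr rfl
      intro k _
      ring
    rw [Finset.sum_congr rfl step2]
    have step3 : ∑ u ∈ Finset.range (n+1), Hml u m * ∑ r ∈ Finset.range (n+1), Mq r * ((n-r).choose u : ℚ)
        = ∑ r ∈ Finset.range (n+1), Mq r * ∑ u ∈ Finset.range (n+1), ((n-r).choose u : ℚ) * Hml u m := by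
      simp_rw [Finset.mul_sum]
      rw [Finset.sum_comm]
      apply Finset.sum_congr rfl; intro r _
      apply Finset.sum_congr rfl; intro u _
      ring
    rw [step3]
    have step4 : ∀ r ∈ Finset.range (n+1),
        Mq r * ∑ u ∈ Finset.range (n+1), ((n-r).choose u : ℚ) * Hml u m
        = Mq r * coeff (n-r) (U2 * Mser ^ m) := by
      intro r hr
      rw [Finset.mem_range] at hr
      congr 1
      rw [← ih (n-r)]
      symm
      apply Finset.sum_subset
      · intro x hx; rw [Finset.mem_range] at hx ⊢; omega
      · intro x hx hnx
        rw [Finset.mem_range] at hx hnx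
        rw [Nat.choose_eq_zero_of_lt (by omega)]
        simp
    rw [Finset.sum_congr rfl step4]
    have : U2 * Mser ^ (m+1) = Mser * (U2 * Mser ^ m) := by ring
    rw [this, PowerSeries.coeff_mul, Finset.Nat.sum_antidiagonal_eq_sum_range_succ_mk]
    exact Finset.sum_congr rfl fun r _ => by rw [coeff_Mser]

end Aux

open PowerSeries in
theorem stmt_4 (n m : ℕ) :
    ∑ k ∈ Finset.range (n + 1), (n.choose k : ℚ) * Hml k m =
      ∑ j ∈ Finset.range (m + 1), (m.choose j : ℚ) *
        ∑ k ∈ Finset.range (n + 1),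
          Hml k j * (-1) ^ (n - k) * 2 ^ k *
            (((m - j).factorial : ℚ) / ((n - k).factorial : ℚ)) *
            (stirlingFirst (n - k) (m - j) : ℚ) := by
  rw [transform]
  have hrhs : ∀ j ∈ Finset.range (m+1), (m.choose j : ℚ) *
        (∑ k ∈ Finset.range (n+1), Hml k j * (-1)^(n-k) * 2^k *
          (((m-j).factorial : ℚ)/((n-k).factorial : ℚ)) * (stirlingFirst (n-k) (m-j) : ℚ))
      = (m.choose j : ℚ) *
        coeff n (U2 * (PowerSeries.rescale 2 (-Lser))^j * Lser^(m-j)) := by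
    intro j _
    congr 1
    rw [PowerSeries.coeff_mul, Finset.Nat.sum_antidiagonal_eq_sum_range_succ_mk]
    apply Finset.sum_congr rfl
    intro k _
    rw [stirlCoeff]
    have hk : coeff k (U2 * (PowerSeries.rescale 2 (-Lser))^j) = 2^k * Hml k j := by
      rw [U2, ← map_pow, ← map_mul, PowerSeries.coeff_rescale, ← hmlCoeff]
    rw [hk]
    ring
  rw [Finset.sum_congr rfl hrhs]
  have hbin : U2 * Mser^m = ∑ j ∈ Finset.range (m+1),
      ((m.choose j : ℕ) : ℚ⟦X⟧) * (U2 * (PowerSeries.rescale 2 (-Lser))^j * Lser^(m-j)) := by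
    have hM : Mser = PowerSeries.rescale 2 (-Lser) + Lser := by
      rw [Mser, map_neg]; ring
    rw [hM, add_pow, Finset.mul_sum]
    apply Finset.sum_congr rfl; intro j _; ring
  rw [hbin, map_sum]
  apply Finset.sum_congr rfl
  intro j _
  rw [← map_natCast (PowerSeries.C (R := ℚ)) (m.choose j), PowerSeries.coeff_C_mul]
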